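/- arXiv:1603.04911 — 2 statements merged into one kernel-verified Lean document; each statement's English description precedes it below -/
import Mathlib

section
/- (Obstacle avoidance, Proposition 1.) Let O ⊆ ℝ^q be a set (the obstacle). Suppose that for every index i with d − 1 ≤ i ≤ n there exists a vector c_i ∈ ℝ^q such that for every j with i − d + 1 ≤ j ≤ i and every x ∈ O one has ⟨c_i, p_j⟩ < ⟨c_i, x⟩. Then the B-spline curve avoids the obstacle: z(t) ∉ O for every t with τ_{d−1} ≤ t < τ_{n+1}. -/
/-- Cox–de Boor B-spline basis function `B_{i,d}(t)` of order `d` for the knot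
vector `τ`.  In Lean, division by zero yields zero, which matches the standard
convention that any term of the recursion whose denominator vanishes is taken
to be zero. -/
noncomputable def bspline (τ : ℕ → ℝ) : ℕ → ℕ → ℝ → ℝ
  | 0, _, _ => 0
  | 1, i, t => if τ i ≤ t ∧ t < τ (i + 1) then 1 else 0
  | d + 2, i, t =>
      (t - τ i) / (τ (i + d + 1) - τ i) * bspline τ (d + 1) i t
      + (τ (i + d + 2) - t) / (τ (i + d + 2) - τ (i + 1)) * bspline τ (d + 1) (i + 1) t
theorem bspline_congr (τ σ : ℕ → ℝ) : ∀ (d i : ℕ) (t : ℝ),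
    (∀ a, i ≤ a → a ≤ i + d → τ a = σ a) → bspline τ d i t = bspline σ d i t
  | 0, i, t, h => rfl
  | 1, i, t, h => by
      simp only [bspline, h i le_rfl (by omega), h (i+1) (by omega) (by omega)]
  | d+2, i, t, h => by
      simp only [bspline]
      rw [bspline_congr τ σ (d+1) i t (fun a h1 h2 => h a h1 (by omega)),
          bspline_congr τ σ (d+1) (i+1) t (fun a h1 h2 => h a (by omega) (by omega)),
          h i le_rfl (by omega), h (i+d+1) (by omega) (by omega),
          h (i+d+2) (by omega) (by omega), h (i+1) (by omega) (by omega)]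

theorem bspline_supp (τ : ℕ → ℝ) (hm : Monotone τ) : ∀ (d i : ℕ) (t : ℝ),
    bspline τ d i t ≠ 0 → τ i ≤ t ∧ t < τ (i + d)
  | 0, i, t, h => absurd rfl h
  | 1, i, t, h => by
      simp only [bspline] at h
      split at h
      · assumption
      · exact absurd rfl h
  | d+2, i, t, h => by
      simp only [bspline] at h
      have : (t - τ i) / (τ (i + d + 1) - τ i) * bspline τ (d + 1) i t ≠ 0 ∨
          (τ (i + d + 2) - t) / (τ (i + d + 2) - τ (i + 1)) * bspline τ (d + 1) (i + 1) t ≠ 0 := by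
        by_contra hc
        push_neg at hc
        rw [hc.1, hc.2, add_zero] at h
        exact h rfl
      rcases this with h1 | h2
      · have hb : bspline τ (d+1) i t ≠ 0 := fun hb => h1 (by rw [hb, mul_zero])
        obtain ⟨ha, hb⟩ := bspline_supp τ hm (d+1) i t hb
        exact ⟨ha, lt_of_lt_of_le hb (hm (by omega))⟩
      · have hb : bspline τ (d+1) (i+1) t ≠ 0 := fun hb => h2 (by rw [hb, mul_zero])
        obtain ⟨ha, hb⟩ := bspline_supp τ hm (d+1) (i+1) t hb
        refine ⟨le_trans (hm (by omega)) ha, ?_⟩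
        have : i + 1 + (d + 1) = i + (d + 2) := by omega
        rwa [this] at hb

theorem bspline_nonneg (τ : ℕ → ℝ) (hm : Monotone τ) : ∀ (d i : ℕ) (t : ℝ),
    0 ≤ bspline τ d i t
  | 0, _, _ => le_rfl
  | 1, i, t => by
      simp only [bspline]
      split <;> norm_num
  | d+2, i, t => by
      simp only [bspline]
      have h1 := bspline_nonneg τ hm (d+1) i t
      have h2 := bspline_nonneg τ hm (d+1) (i+1) t
      apply add_nonneg
      · rcases eq_or_ne (bspline τ (d+1) i t) 0 with h | h
        · rw [h, mul_zero]
        · have := (bspline_supp τ hm (d+1) i t h).1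
          exact mul_nonneg (div_nonneg (by linarith) (sub_nonneg.2 (hm (by omega)))) h1
      · rcases eq_or_ne (bspline τ (d+1) (i+1) t) 0 with h | h
        · rw [h, mul_zero]
        · have := (bspline_supp τ hm (d+1) (i+1) t h).2
          have h' : i + 1 + (d + 1) = i + d + 2 := by omega
          rw [h'] at this
          exact mul_nonneg (div_nonneg (by linarith) (sub_nonneg.2 (hm (by omega)))) h2


theorem bspline_partition (τ : ℕ → ℝ) (m : ℕ) (hm : Monotone τ)
    (hs : ∀ a, a < m → τ a < τ (a + 1)) :
    ∀ (e k : ℕ) (t : ℝ), k + 2*e + 1 ≤ m → τ (k+e) ≤ t → t < τ (k+e+1) →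
      ∑ r ∈ Finset.range (e+1), bspline τ (e+1) (k+r) t = 1
  | 0, k, t, hkm, ht1, ht2 => by
      rw [show (0:ℕ)+1 = 1 from rfl, Finset.sum_range_one]
      simp only [bspline]
      rw [if_pos ⟨ht1, ht2⟩]
  | e+1, k, t, hkm, ht1, ht2 => by
      have hBk : bspline τ (e+1) k t = 0 := by
        by_contra h
        have := (bspline_supp τ hm (e+1) k t h).2
        exact absurd ht1 (not_le.2 (lt_of_lt_of_le this (hm (by omega))))
      have hBend : bspline τ (e+1) (k+e+2) t = 0 := by
        by_contra h
        have := (bspline_supp τ hm (e+1) (k+e+2) t h).1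
        exact absurd ht2 (not_lt.2 (le_trans (hm (by omega)) this))
      have hIH : ∑ r ∈ Finset.range (e+1), bspline τ (e+1) (k+1+r) t = 1 :=
        bspline_partition τ m hm hs e (k+1) t (by omega)
          (by rwa [show k+1+e = k+(e+1) from by omega])
          (by rwa [show k+1+e+1 = k+(e+1)+1 from by omega])
      have step1 : ∑ r ∈ Finset.range (e+2), bspline τ (e+2) (k+r) t
          = (∑ r ∈ Finset.range (e+2),
              (t - τ (k+r)) / (τ (k+r+e+1) - τ (k+r)) * bspline τ (e+1) (k+r) t)
            + ∑ r ∈ Finset.range (e+2),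
              (τ (k+r+e+2) - t) / (τ (k+r+e+2) - τ (k+r+1)) * bspline τ (e+1) (k+r+1) t := by
        rw [← Finset.sum_add_distrib]
        exact Finset.sum_congr rfl fun r _ => by simp only [bspline]
      have hA : (∑ r ∈ Finset.range (e+2),
            (t - τ (k+r)) / (τ (k+r+e+1) - τ (k+r)) * bspline τ (e+1) (k+r) t)
          = ∑ r ∈ Finset.range (e+1),
            (t - τ (k+(r+1))) / (τ (k+(r+1)+e+1) - τ (k+(r+1))) * bspline τ (e+1) (k+(r+1)) t := by
        rw [Finset.sum_range_succ', show k+0 = k from rfl, hBk, mul_zero, add_zero]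
      have hB : (∑ r ∈ Finset.range (e+2),
            (τ (k+r+e+2) - t) / (τ (k+r+e+2) - τ (k+r+1)) * bspline τ (e+1) (k+r+1) t)
          = ∑ r ∈ Finset.range (e+1),
            (τ (k+r+e+2) - t) / (τ (k+r+e+2) - τ (k+r+1)) * bspline τ (e+1) (k+r+1) t := by
        rw [Finset.sum_range_succ, show k+(e+1)+1 = k+e+2 from by omega, hBend, mul_zero, add_zero]
      rw [step1, hA, hB, ← Finset.sum_add_distrib, ← hIH]
      refine Finset.sum_congr rfl fun r hr => ?_
      simp only [Finset.mem_range] at hr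
      have hne : τ (k+r+1) < τ (k+r+e+2) := by
        calc τ (k+r+1) ≤ τ (k+r+e+1) := hm (by omega)
          _ < τ (k+r+e+2) := hs _ (by omega)
      have h1 : k + (r+1) = k + r + 1 := by omega
      have h2 : k + (r+1) + e + 1 = k + r + e + 2 := by omega
      have h3 : k + 1 + r = k + r + 1 := by omega
      rw [h2, h1, h3, ← add_mul, ← add_div,
        show t - τ (k + r + 1) + (τ (k + r + e + 2) - t) = τ (k + r + e + 2) - τ (k + r + 1) from
          by ring,
        div_self (by linarith), one_mul]

open scoped RealInnerProductSpace

/-- Proposition 1: if for every window of `d` consecutive control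
points there is a hyperplane strictly separating them from the obstacle `O`,
then the B-spline curve avoids `O` (here `n = m - d`). -/
theorem bspline_obstacle_avoidance (q m d : ℕ) (τ : ℕ → ℝ)
    (hτ : ∀ j, j < m → τ j < τ (j + 1))
    (hd : 1 ≤ d) (hdm : d ≤ m)
    (p : ℕ → EuclideanSpace ℝ (Fin q))
    (O : Set (EuclideanSpace ℝ (Fin q)))
    (hsep : ∀ i, d - 1 ≤ i → i ≤ m - d →
      ∃ c : EuclideanSpace ℝ (Fin q),
        ∀ j, i - (d - 1) ≤ j → j ≤ i → ∀ x ∈ O, ⟪c, p j⟫ < ⟪c, x⟫)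
    (t : ℝ) (ht1 : τ (d - 1) ≤ t) (ht2 : t < τ (m - d + 1)) :
    (∑ j ∈ Finset.range (m - d + 1), bspline τ d j t • p j) ∉ O := by
  obtain ⟨e, rfl⟩ : ∃ e, d = e + 1 := ⟨d - 1, by omega⟩
  simp only [Nat.add_sub_cancel] at ht1 hsep ⊢
  have mono_le : ∀ b, b ≤ m → ∀ a, a ≤ b → τ a ≤ τ b := by
    intro b
    induction b with
    | zero => intro _ a ha; interval_cases a; exact le_rfl
    | succ n ih =>
      intro hbm a ha
      rcases Nat.eq_or_lt_of_le ha with h | h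
      · exact h ▸ le_rfl
      · exact le_trans (ih (by omega) a (by omega)) (le_of_lt (hτ n (by omega)))
  by_cases hcase : m - (e + 1) + 1 ≤ e
  · exact absurd ht2 (not_lt.2 (le_trans (mono_le e (by omega) _ hcase) ht1))
  push_neg at hcase
  have hdm' : e ≤ m - (e + 1) := by omega
  let τ' : ℕ → ℝ := fun j => τ (min j m)
  have hagree : ∀ a, a ≤ m → τ' a = τ a := fun a ha => by
    simp only [τ', Nat.min_eq_left ha]
  have hm' : Monotone τ' := fun a b hab =>
    mono_le _ (min_le_right _ _) _ (min_le_min hab le_rfl)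
  have hs' : ∀ a, a < m → τ' a < τ' (a + 1) := by
    intro a ha
    rw [hagree a (by omega), hagree (a + 1) (by omega)]
    exact hτ a ha
  -- find the knot interval containing t
  set S := (Finset.Icc e (m - (e + 1))).filter (fun j => τ j ≤ t) with hS
  have hSne : S.Nonempty :=
    ⟨e, by simp only [hS, Finset.mem_filter, Finset.mem_Icc]; exact ⟨⟨le_rfl, hdm'⟩, ht1⟩⟩
  set i := S.max' hSne with hidef
  have hiS : i ∈ S := S.max'_mem hSne
  rw [hS, Finset.mem_filter, Finset.mem_Icc] at hiS
  obtain ⟨⟨hi1, hi2⟩, hit⟩ := hiS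
  have hti1 : t < τ (i + 1) := by
    rcases Nat.eq_or_lt_of_le hi2 with h | h
    · rw [h]; exact ht2
    · by_contra hcon
      push_neg at hcon
      have hmem : i + 1 ∈ S := by
        rw [hS, Finset.mem_filter, Finset.mem_Icc]
        exact ⟨⟨by omega, by omega⟩, hcon⟩
      have := S.le_max' _ hmem
      omega
  obtain ⟨c, hc⟩ := hsep i hi1 hi2
  have him : i + (e + 1) + 1 ≤ m + 1 := by omega
  set k := i - e with hkdef
  have hki : k + e = i := by omega
  -- agreement of bspline for τ and τ'
  have Bagree : ∀ j, j ≤ m - (e + 1) → bspline τ (e + 1) j t = bspline τ' (e + 1) j t :=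
    fun j hj => bspline_congr τ τ' (e + 1) j t
      (fun a h1 h2 => (hagree a (by omega)).symm)
  -- vanishing outside the window
  have hZero : ∀ j, j ≤ m - (e + 1) → (j < k ∨ i < j) → bspline τ' (e + 1) j t = 0 := by
    intro j hj hjw
    by_contra h
    obtain ⟨hA, hB⟩ := bspline_supp τ' hm' (e + 1) j t h
    rcases hjw with h1 | h2
    · have hle : τ' (j + (e + 1)) ≤ τ' i := hm' (by omega)
      rw [hagree i (by omega)] at hle
      exact absurd hB (not_lt.2 (le_trans hle hit))
    · have hle : τ' (i + 1) ≤ τ' j := hm' (by omega)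
      rw [hagree (i + 1) (by omega)] at hle
      exact absurd hA (not_le.2 (lt_of_lt_of_le hti1 hle))
  -- partition of unity
  have hpart : ∑ r ∈ Finset.range (e + 1), bspline τ' (e + 1) (k + r) t = 1 :=
    bspline_partition τ' m hm' hs' e k t (by omega)
      (by rw [hki, hagree i (by omega)]; exact hit)
      (by rw [hki, hagree (i + 1) (by omega)]; exact hti1)
  have hsub : Finset.Icc k (k + e) ⊆ Finset.range (m - (e + 1) + 1) := by
    intro x hx
    rw [Finset.mem_Icc] at hx
    rw [Finset.mem_range]
    omega
  have hsum : ∑ j ∈ Finset.range (m - (e + 1) + 1), bspline τ' (e + 1) j t = 1 := by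
    rw [← Finset.sum_subset hsub (fun x hx hx2 => by
      rw [Finset.mem_range] at hx
      rw [Finset.mem_Icc] at hx2
      exact hZero x (by omega) (by omega))]
    rw [← Finset.Ico_add_one_right_eq_Icc, Finset.sum_Ico_eq_sum_range,
      show k + e + 1 - k = e + 1 from by omega]
    exact hpart
  -- main argument
  intro hz
  rw [Finset.sum_congr rfl (fun j hj => by
    rw [Bagree j (by rw [Finset.mem_range] at hj; omega)])] at hz
  set z := ∑ j ∈ Finset.range (m - (e + 1) + 1), bspline τ' (e + 1) j t • p j with hzdef
  have key : ⟪c, z⟫ < ⟪c, z⟫ := by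
    have h0 : ⟪c, z⟫ = ∑ j ∈ Finset.range (m - (e + 1) + 1),
        bspline τ' (e + 1) j t * ⟪c, p j⟫ := by
      rw [hzdef, inner_sum]
      exact Finset.sum_congr rfl fun j _ => real_inner_smul_right c (p j) _
    have h2 : ∑ j ∈ Finset.range (m - (e + 1) + 1), bspline τ' (e + 1) j t * ⟪c, z⟫
        = ⟪c, z⟫ := by
      rw [← Finset.sum_mul, hsum, one_mul]
    obtain ⟨j0, hj0, hne0⟩ := Finset.exists_ne_zero_of_sum_ne_zero
      (hsum ▸ (one_ne_zero : (1:ℝ) ≠ 0))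
    have hpos : 0 < bspline τ' (e + 1) j0 t :=
      (bspline_nonneg τ' hm' (e + 1) j0 t).lt_of_ne (Ne.symm hne0)
    have hj0r : j0 ≤ m - (e + 1) := by rw [Finset.mem_range] at hj0; omega
    have hw0 : k ≤ j0 ∧ j0 ≤ i := by
      by_contra hno
      exact hne0 (hZero j0 hj0r (by omega))
    calc ⟪c, z⟫ = ∑ j ∈ Finset.range (m - (e + 1) + 1),
          bspline τ' (e + 1) j t * ⟪c, p j⟫ := h0
      _ < ∑ j ∈ Finset.range (m - (e + 1) + 1),
          bspline τ' (e + 1) j t * ⟪c, z⟫ := Finset.sum_lt_sum ?_ ⟨j0, hj0, ?_⟩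
      _ = ⟪c, z⟫ := h2
    · intro j hj
      by_cases hw : k ≤ j ∧ j ≤ i
      · exact mul_le_mul_of_nonneg_left (le_of_lt (hc j hw.1 hw.2 z hz))
          (bspline_nonneg τ' hm' (e + 1) j t)
      · rw [hZero j (by rw [Finset.mem_range] at hj; omega) (by omega), zero_mul, zero_mul]
    · exact mul_lt_mul_of_pos_left (hc j0 hw0.1 hw0.2 z hz) hpos
  exact lt_irrefl _ key
end

section
/- (Mixed-integer inter-agent collision avoidance, Corollary 2.) Let z¹ and z² be two B-spline curves of the same order d defined over the same strictly increasing knot vector τ_0 < … < τ_m, with control points p^1_0,…,p^1_n and p^2_0,…,p^2_n respectively (n = m − d). Let h_1,…,h_M ∈ ℝ^q, let T ∈ ℝ, and suppose for every index i with d − 1 ≤ i ≤ n there are binary variables β_{i,1},…,β_{i,M} ∈ {0,1} such that: (a) Σ_{m=1}^{M} β_{i,m} ≤ M − 1, and (b) ⟨h_m, p^1_{j_1}⟩ < ⟨h_m, p^2_{j_2}⟩ + T·β_{i,m} for all m = 1,…,M and all j_1, j_2 with i − d + 1 ≤ j_1, j_2 ≤ i. Then z¹(t) ≠ z²(t) for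 every t with τ_{d−1} ≤ t < τ_{n+1}. -/
open scoped RealInnerProductSpace

lemma bspline_one (τ : ℕ → ℝ) (i : ℕ) (t : ℝ) :
    bspline τ 1 i t = if τ i ≤ t ∧ t < τ (i + 1) then 1 else 0 := rfl

lemma bspline_two (τ : ℕ → ℝ) (d i : ℕ) (t : ℝ) :
    bspline τ (d + 2) i t =
      (t - τ i) / (τ (i + d + 1) - τ i) * bspline τ (d + 1) i t
      + (τ (i + d + 2) - t) / (τ (i + d + 2) - τ (i + 1)) * bspline τ (d + 1) (i + 1) t := rfl

section helpers
variable (τ : ℕ → ℝ) (m : ℕ)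

lemma tau_mono (hτ : ∀ j, j < m → τ j < τ (j + 1)) :
    ∀ a b, a ≤ b → b ≤ m → τ a ≤ τ b := by
  intro a b hab hbm
  induction b with
  | zero => obtain rfl : a = 0 := by omega
            exact le_refl _
  | succ b ih =>
      rcases Nat.eq_or_lt_of_le hab with h | h
      · exact le_of_eq (by rw [h])
      · exact le_trans (ih (by omega) (by omega)) (le_of_lt (hτ b (by omega)))

lemma bspline_zero_left (hτ : ∀ j, j < m → τ j < τ (j + 1)) (t : ℝ) :
    ∀ d j, j + d ≤ m → t < τ j → bspline τ d j t = 0 := by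
  intro d
  induction d with
  | zero => intro j _ _; rfl
  | succ d ih =>
    cases d with
    | zero =>
        intro j _ hlt
        rw [bspline_one, if_neg]
        rintro ⟨h1, _⟩; linarith
    | succ d =>
        intro j hjm hlt
        rw [bspline_two, ih j (by omega) hlt,
          ih (j + 1) (by omega)
            (lt_of_lt_of_le hlt (tau_mono τ m hτ j (j + 1) (by omega) (by omega)))]
        ring

lemma bspline_zero_right (hτ : ∀ j, j < m → τ j < τ (j + 1)) (t : ℝ) :
    ∀ d j, j + d ≤ m → τ (j + d) ≤ t → bspline τ d j t = 0 := by
  intro d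
  induction d with
  | zero => intro j _ _; rfl
  | succ d ih =>
    cases d with
    | zero =>
        intro j _ hle
        rw [bspline_one, if_neg]
        rintro ⟨_, h2⟩; linarith
    | succ d =>
        intro j hjm hle
        have hle' : τ (j + d + 2) ≤ t := hle
        have h1 : τ (j + (d + 1)) ≤ t :=
          le_trans (tau_mono τ m hτ (j + d + 1) (j + d + 2) (by omega) (by omega)) hle'
        rw [bspline_two, ih j (by omega) h1,
          ih (j + 1) (by omega) (by rw [show j + 1 + (d + 1) = j + d + 2 by omega]; exact hle')]
        ring

lemma bspline_nonneg_s10 (hτ : ∀ j, j < m → τ j < τ (j + 1)) (t : ℝ) :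
    ∀ d j, j + d ≤ m → 0 ≤ bspline τ d j t := by
  intro d
  induction d with
  | zero => intro j _; exact le_refl 0
  | succ d ih =>
    cases d with
    | zero =>
        intro j _
        rw [bspline_one]
        split <;> norm_num
    | succ d =>
        intro j hjm
        rw [bspline_two]
        have hA : 0 ≤ (t - τ j) / (τ (j + d + 1) - τ j) * bspline τ (d + 1) j t := by
          by_cases hB : bspline τ (d + 1) j t = 0
          · rw [hB]; ring_nf; exact le_refl 0
          · have hBpos : 0 < bspline τ (d + 1) j t :=
              lt_of_le_of_ne (ih j (by omega)) (Ne.symm hB)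
            have hjt : τ j ≤ t := by
              by_contra hc
              push_neg at hc
              exact hB (bspline_zero_left τ m hτ t (d + 1) j (by omega) hc)
            have hden : τ j ≤ τ (j + d + 1) := tau_mono τ m hτ j (j + d + 1) (by omega) (by omega)
            exact mul_nonneg (div_nonneg (by linarith) (by linarith)) (le_of_lt hBpos)
        have hBxx : 0 ≤ (τ (j + d + 2) - t) / (τ (j + d + 2) - τ (j + 1)) *
            bspline τ (d + 1) (j + 1) t := by
          by_cases hB : bspline τ (d + 1) (j + 1) t = 0
          · rw [hB]; ring_nf; exact le_refl 0
          · have hBpos : 0 < bspline τ (d + 1) (j + 1) t :=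
              lt_of_le_of_ne (ih (j + 1) (by omega)) (Ne.symm hB)
            have hjt : t < τ (j + d + 2) := by
              by_contra hc
              push_neg at hc
              exact hB (bspline_zero_right τ m hτ t (d + 1) (j + 1) (by omega)
                (by rw [show j + 1 + (d + 1) = j + d + 2 by omega]; exact hc))
            have hden : τ (j + 1) ≤ τ (j + d + 2) :=
              tau_mono τ m hτ (j + 1) (j + d + 2) (by omega) (by omega)
            exact mul_nonneg (div_nonneg (by linarith) (by linarith)) (le_of_lt hBpos)
        linarith

end helpers

lemma tau_strict (τ : ℕ → ℝ) (m : ℕ) (hτ : ∀ j, j < m → τ j < τ (j + 1)) :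
    ∀ a b, a < b → b ≤ m → τ a < τ b := fun a b hab hbm =>
  lt_of_le_of_lt (tau_mono τ m hτ a (b - 1) (by omega) (by omega))
    (by rw [show b = (b - 1) + 1 by omega] at hbm ⊢; exact hτ (b - 1) (by omega))

lemma bspline_sum_one (τ : ℕ → ℝ) (m : ℕ) (hτ : ∀ j, j < m → τ j < τ (j + 1))
    (t : ℝ) (i : ℕ) (hti : τ i ≤ t) (hti' : t < τ (i + 1)) :
    ∀ d, 1 ≤ d → d - 1 ≤ i → i + d ≤ m →
      ∑ j ∈ Finset.Icc (i - (d - 1)) i, bspline τ d j t = 1 := by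
  intro d hd
  induction d, hd using Nat.le_induction with
  | base =>
      intro _ _
      simp only [Nat.sub_self, Nat.sub_zero, Finset.Icc_self, Finset.sum_singleton]
      rw [bspline_one, if_pos ⟨hti, hti'⟩]
  | succ d hd ih =>
      intro hdi him
      have hdi' : d ≤ i := by omega
      rw [show (d + 1) - 1 = d from rfl]
      -- rewrite each term by the recursion
      have key : ∀ j ∈ Finset.Icc (i - d) i, bspline τ (d + 1) j t
          = (t - τ j) / (τ (j + d) - τ j) * bspline τ d j t
            + (τ (j + d + 1) - t) / (τ (j + d + 1) - τ (j + 1)) * bspline τ d (j + 1) t := by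
        intro j _
        obtain ⟨d', rfl⟩ : ∃ d', d = d' + 1 := ⟨d - 1, by omega⟩
        rw [bspline_two]
        norm_num [Nat.add_assoc]
      rw [Finset.sum_congr rfl key, Finset.sum_add_distrib]
      -- reindex the second sum
      have reidx : (∑ j ∈ Finset.Icc (i - d) i,
            (τ (j + d + 1) - t) / (τ (j + d + 1) - τ (j + 1)) * bspline τ d (j + 1) t)
          = ∑ j ∈ Finset.Icc (i - d + 1) (i + 1),
            (τ (j + d) - t) / (τ (j + d) - τ j) * bspline τ d j t := by
        refine Finset.sum_nbij' (fun j => j + 1) (fun j => j - 1) ?_ ?_ ?_ ?_ ?_ <;>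
          intro j hj <;> simp only [Finset.mem_Icc] at * <;> try omega
        rw [show j + 1 + d = j + d + 1 by omega]
      rw [reidx]
      -- peel off the vanishing boundary terms
      have hins1 : Finset.Icc (i - d) i = insert (i - d) (Finset.Icc (i - d + 1) i) := by
        ext x; simp only [Finset.mem_insert, Finset.mem_Icc]; omega
      have hins2 : Finset.Icc (i - d + 1) (i + 1)
          = insert (i + 1) (Finset.Icc (i - d + 1) i) := by
        ext x; simp only [Finset.mem_insert, Finset.mem_Icc]; omega
      have hz1 : bspline τ d (i - d) t = 0 := by
        apply bspline_zero_right τ m hτ t d (i - d) (by omega)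
        rw [show i - d + d = i by omega]; exact hti
      have hz2 : bspline τ d (i + 1) t = 0 :=
        bspline_zero_left τ m hτ t d (i + 1) (by omega) hti'
      rw [hins1, hins2, Finset.sum_insert (by simp only [Finset.mem_Icc]; omega),
        Finset.sum_insert (by simp only [Finset.mem_Icc]; omega), hz1, hz2]
      rw [mul_zero, mul_zero, zero_add, zero_add, ← Finset.sum_add_distrib]
      have hcoef : ∀ j ∈ Finset.Icc (i - d + 1) i,
          (t - τ j) / (τ (j + d) - τ j) * bspline τ d j t
            + (τ (j + d) - t) / (τ (j + d) - τ j) * bspline τ d j t = bspline τ d j t := by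
        intro j hj
        simp only [Finset.mem_Icc] at hj
        have hlt : τ j < τ (j + d) := tau_strict τ m hτ j (j + d) (by omega) (by omega)
        rw [← add_mul, ← add_div, show t - τ j + (τ (j + d) - t) = τ (j + d) - τ j by ring,
          div_self (by linarith), one_mul]
      rw [Finset.sum_congr rfl hcoef]
      have := ih (by omega) (by omega)
      rw [show i - (d - 1) = i - d + 1 by omega] at this
      exact this


/-- Corollary 2: mixed-integer inter-agent collision avoidance
for two B-spline curves sharing the same knot vector (here `n = m - d`;
hyperplane normals are indexed `0, …, M-1`). -/
theorem bspline_mixed_integer_interagent_avoidance (q m d M : ℕ) (τ : ℕ → ℝ)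
    (hτ : ∀ j, j < m → τ j < τ (j + 1))
    (hd : 1 ≤ d) (hdm : d ≤ m)
    (p1 p2 : ℕ → EuclideanSpace ℝ (Fin q))
    (h : ℕ → EuclideanSpace ℝ (Fin q))
    (T : ℝ)
    (hmi : ∀ i, d - 1 ≤ i → i ≤ m - d →
      ∃ β : ℕ → ℝ,
        (∀ l, l < M → β l = 0 ∨ β l = 1) ∧
        (∑ l ∈ Finset.range M, β l ≤ (M : ℝ) - 1) ∧
        (∀ l, l < M → ∀ j1 j2, i - (d - 1) ≤ j1 → j1 ≤ i →
          i - (d - 1) ≤ j2 → j2 ≤ i →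
          ⟪h l, p1 j1⟫ < ⟪h l, p2 j2⟫ + T * β l))
    (t : ℝ) (ht1 : τ (d - 1) ≤ t) (ht2 : t < τ (m - d + 1)) :
    (∑ j ∈ Finset.range (m - d + 1), bspline τ d j t • p1 j) ≠
      (∑ j ∈ Finset.range (m - d + 1), bspline τ d j t • p2 j) := by
  -- the window is nonempty: d - 1 ≤ m - d
  have hwd : d - 1 ≤ m - d := by
    by_contra hc
    push_neg at hc
    have : τ (m - d + 1) ≤ τ (d - 1) := tau_mono τ m hτ _ _ (by omega) (by omega)
    linarith
  -- find the knot span containing t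
  set s : Finset ℕ := (Finset.Icc (d - 1) (m - d)).filter (fun i => τ i ≤ t) with hs
  have hne : s.Nonempty :=
    ⟨d - 1, by simp only [hs, Finset.mem_filter, Finset.mem_Icc]; exact ⟨⟨le_refl _, hwd⟩, ht1⟩⟩
  set i : ℕ := s.max' hne with hi
  have hims : i ∈ s := s.max'_mem hne
  simp only [hs, Finset.mem_filter, Finset.mem_Icc] at hims
  obtain ⟨⟨hi1, hi2⟩, hit⟩ := hims
  have hit' : t < τ (i + 1) := by
    rcases Nat.eq_or_lt_of_le hi2 with heq | hlt
    · rw [heq]; exact ht2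
    · by_contra hc
      push_neg at hc
      have : i + 1 ∈ s := by
        simp only [hs, Finset.mem_filter, Finset.mem_Icc]; exact ⟨⟨by omega, by omega⟩, hc⟩
      have := s.le_max' _ this
      omega
  -- choose a separating hyperplane
  obtain ⟨β, hβ01, hβsum, hβlt⟩ := hmi i hi1 hi2
  have hl : ∃ l, l < M ∧ β l = 0 := by
    by_contra hc
    push_neg at hc
    have : ∀ l ∈ Finset.range M, β l = 1 := by
      intro l hl
      rw [Finset.mem_range] at hl
      rcases hβ01 l hl with h0 | h1
      · exact absurd h0 (hc l hl)
      · exact h1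
    rw [Finset.sum_congr rfl this, Finset.sum_const, Finset.card_range, nsmul_eq_mul,
      mul_one] at hβsum
    linarith
  obtain ⟨l, hlM, hl0⟩ := hl
  have hsep : ∀ j, i - (d - 1) ≤ j → j ≤ i → ⟪h l, p1 j⟫ < ⟪h l, p2 j⟫ := by
    intro j hj1 hj2
    have := hβlt l hlM j j hj1 hj2 hj1 hj2
    rw [hl0, mul_zero, add_zero] at this
    exact this
  -- the window
  set W : Finset ℕ := Finset.Icc (i - (d - 1)) i with hW
  have hWsub : W ⊆ Finset.range (m - d + 1) := by
    intro x hx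
    simp only [hW, Finset.mem_Icc] at hx
    simp only [Finset.mem_range]; omega
  have houter : ∀ j ∈ Finset.range (m - d + 1), j ∉ W → bspline τ d j t = 0 := by
    intro j hjr hjW
    simp only [Finset.mem_range] at hjr
    simp only [hW, Finset.mem_Icc, not_and_or, not_le] at hjW
    rcases hjW with hlo | hhi
    · apply bspline_zero_right τ m hτ t d j (by omega)
      exact le_trans (tau_mono τ m hτ (j + d) i (by omega) (by omega)) hit
    · apply bspline_zero_left τ m hτ t d j (by omega)
      exact lt_of_lt_of_le hit' (tau_mono τ m hτ (i + 1) j (by omega) (by omega))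
  have hred : ∀ p : ℕ → EuclideanSpace ℝ (Fin q),
      (∑ j ∈ Finset.range (m - d + 1), bspline τ d j t • p j)
        = ∑ j ∈ W, bspline τ d j t • p j := by
    intro p
    refine (Finset.sum_subset hWsub ?_).symm
    intro x hx hxW
    rw [houter x hx hxW, zero_smul]
  intro heq
  rw [hred p1, hred p2] at heq
  have hinner := congrArg (fun v : EuclideanSpace ℝ (Fin q) => (inner ℝ (h l) v : ℝ)) heq
  simp only [inner_sum, real_inner_smul_right] at hinner
  -- partition of unity gives a positive basis function in the window
  have hsum1 : ∑ j ∈ W, bspline τ d j t = 1 :=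
    bspline_sum_one τ m hτ t i hit hit' d hd (by omega) (by omega)
  have hpos : ∃ j ∈ W, 0 < bspline τ d j t := by
    by_contra hc
    push_neg at hc
    have : ∑ j ∈ W, bspline τ d j t ≤ 0 :=
      Finset.sum_nonpos hc
    linarith
  obtain ⟨j0, hj0W, hj0pos⟩ := hpos
  have hmemW : ∀ j ∈ W, i - (d - 1) ≤ j ∧ j ≤ i := by
    intro j hj; simpa [hW, Finset.mem_Icc] using hj
  have : (∑ j ∈ W, bspline τ d j t * (inner ℝ (h l) (p1 j) : ℝ))
      < ∑ j ∈ W, bspline τ d j t * (inner ℝ (h l) (p2 j) : ℝ) := by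
    apply Finset.sum_lt_sum
    · intro j hj
      obtain ⟨ha, hb⟩ := hmemW j hj
      have hB : 0 ≤ bspline τ d j t := bspline_nonneg_s10 τ m hτ t d j (by omega)
      exact mul_le_mul_of_nonneg_left (le_of_lt (hsep j ha hb)) hB
    · obtain ⟨ha, hb⟩ := hmemW j0 hj0W
      exact ⟨j0, hj0W, mul_lt_mul_of_pos_left (hsep j0 ha hb) hj0pos⟩
  linarith [hinner, this]
end
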